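/- Let G' be obtained from the constant-diameter disjointness graph G(a,b) by adding the edge {1, 3r+2}. Then G' contains a cycle (of length ≥ 3) if and only if DISJ(a,b) = 1. -/

import Mathlib

/-- The edge relation of the constant-diameter disjointness graph `G(a,b)`. -/
def disjRel (r : ℕ) (a b : Fin r → Bool) (x y : ℕ) : Prop :=
  (∃ i : Fin r, x = 1 ∧ y = (i : ℕ) + 2) ∨
  (∃ i : Fin r, x = 3 * r + 2 ∧ y = (i : ℕ) + 2 * r + 2) ∨
  (∃ i : Fin r, a i = true ∧ x = (i : ℕ) + 2 ∧ y = (i : ℕ) + r + 2) ∨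
  (∃ i : Fin r, b i = true ∧ x = (i : ℕ) + r + 2 ∧ y = (i : ℕ) + 2 * r + 2)

/-- The graph `G'` obtained from the disjointness graph `G(a,b)` by adding the
extra edge `{1, 3r+2}`. -/
def disjCycleGraph (r : ℕ) (a b : Fin r → Bool) : SimpleGraph ℕ :=
  SimpleGraph.fromRel (fun x y => disjRel r a b x y ∨ (x = 1 ∧ y = 3 * r + 2))

open SimpleGraph Walk

/-- `getVert` agrees with indexing into the support list. -/
lemma walk_support_getElem? {V : Type*} {G : SimpleGraph V} :
    ∀ {u v : V} (p : G.Walk u v) (n : ℕ), n ≤ p.length →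
      p.support[n]? = some (p.getVert n) := by
  intro u v p
  induction p with
  | nil =>
    intro n hn
    have : n = 0 := by simpa using hn
    subst this
    simp [Walk.getVert]
  | cons h q ih =>
    intro n hn
    cases n with
    | zero => simp [Walk.getVert]
    | succ m =>
      simp only [Walk.support_cons, List.getElem?_cons_succ, Walk.getVert_cons_succ]
      exact ih m (by simpa using hn)

/-- Every vertex on a cycle has two distinct neighbours which are again on the cycle. -/
lemma cycle_two_neighbors {V : Type*} [DecidableEq V] {G : SimpleGraph V} {x v : V} {c : G.Walk x x}
    (hc : c.IsCycle) (hv : v ∈ c.support) :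
    ∃ u w, u ≠ w ∧ u ∈ c.support ∧ w ∈ c.support ∧ G.Adj v u ∧ G.Adj v w := by
  set c' := c.rotate v hv with hc'def
  have hc' : c'.IsCycle := hc.rotate hv
  have hmem : ∀ z, z ∈ c'.support → z ∈ c.support := by
    intro z hz
    rw [Walk.support_eq_cons] at hz
    rcases List.mem_cons.mp hz with h | h
    · subst h; exact hv
    · exact List.mem_of_mem_tail
        ((List.IsRotated.mem_iff (Walk.support_rotate c v hv)).mp h)
  have hn3 : 3 ≤ c'.length := hc'.three_le_length
  have hnnil : ¬ c'.Nil := hc'.not_nil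
  refine ⟨c'.getVert 1, c'.getVert (c'.length - 1), ?_, ?_, ?_, ?_, ?_⟩
  · -- distinctness via nodup of support tail
    intro heq
    have hnd : c'.support.tail.Nodup := hc'.support_nodup
    have h1 : c'.support[1]? = some (c'.getVert 1) :=
      walk_support_getElem? c' 1 (by omega)
    have h2 : c'.support[(c'.length - 1)]? = some (c'.getVert (c'.length - 1)) :=
      walk_support_getElem? c' (c'.length - 1) (by omega)
    have hse : c'.support = v :: c'.support.tail := Walk.support_eq_cons c'
    have hlen : c'.support.tail.length = c'.length := by
      have h1 := Walk.length_support c'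
      rw [hse, List.length_cons] at h1
      omega
    have ht1 : c'.support.tail[0]? = some (c'.getVert 1) := by
      rw [hse] at h1; simpa using h1
    have ht2 : c'.support.tail[(c'.length - 2)]? = some (c'.getVert (c'.length - 1)) := by
      have h2' : c'.support[(c'.length - 2) + 1]? = some (c'.getVert (c'.length - 2 + 1)) :=
        walk_support_getElem? c' _ (by omega)
      have heq2 : c'.length - 2 + 1 = c'.length - 1 := by omega
      rw [hse, List.getElem?_cons_succ, heq2] at h2'
      exact h2'
    rw [← heq] at ht2
    have := (List.getElem?_inj (i := 0) (by omega) hnd).mp (ht1.trans ht2.symm)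
    omega
  · exact hmem _ (Walk.mem_support_iff_exists_getVert.mpr ⟨1, rfl, by omega⟩)
  · exact hmem _ (Walk.mem_support_iff_exists_getVert.mpr ⟨c'.length - 1, rfl, by omega⟩)
  · have := c'.adj_getVert_succ (i := 0) (by omega)
    simpa using this
  · have := c'.adj_getVert_succ (i := c'.length - 1) (by omega)
    have h' : c'.length - 1 + 1 = c'.length := by omega
    rw [h', Walk.getVert_length] at this
    exact this.symm

section NeighborLemmas

variable {r : ℕ} {a b : Fin r → Bool}

lemma adj_cases {x y : ℕ} (h : (disjCycleGraph r a b).Adj x y) :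
    x ≠ y ∧ ((disjRel r a b x y ∨ (x = 1 ∧ y = 3 * r + 2)) ∨
      (disjRel r a b y x ∨ (y = 1 ∧ x = 3 * r + 2))) := by
  rwa [disjCycleGraph, SimpleGraph.fromRel_adj] at h

/-- Neighbours of a middle-layer vertex `B_i = i + r + 2`. -/
lemma adj_B {i : Fin r} {u : ℕ} (h : (disjCycleGraph r a b).Adj ((i : ℕ) + r + 2) u) :
    (a i = true ∧ u = (i : ℕ) + 2) ∨ (b i = true ∧ u = (i : ℕ) + 2 * r + 2) := by
  have hi := i.isLt
  obtain ⟨hne, hrel⟩ := adj_cases h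
  rcases hrel with (h | ⟨h1, _⟩) | (h | ⟨_, h1⟩)
  · rcases h with ⟨j, h1, h2⟩ | ⟨j, h1, h2⟩ | ⟨j, hj, h1, h2⟩ | ⟨j, hj, h1, h2⟩ <;>
      [skip; skip; skip; skip] <;>
      first
      | (exfalso; have := j.isLt; omega)
      | (have hji : j = i := Fin.ext (by omega)
         subst hji
         exact Or.inr ⟨hj, by omega⟩)
  · omega
  · rcases h with ⟨j, h1, h2⟩ | ⟨j, h1, h2⟩ | ⟨j, hj, h1, h2⟩ | ⟨j, hj, h1, h2⟩ <;>
      first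
      | (exfalso; have := j.isLt; omega)
      | (have hji : j = i := Fin.ext (by omega)
         subst hji
         exact Or.inl ⟨hj, by omega⟩)
  · omega

/-- Neighbours of a top-layer vertex `A_i = i + 2`. -/
lemma adj_A (hr : 1 ≤ r) {i : Fin r} {u : ℕ}
    (h : (disjCycleGraph r a b).Adj ((i : ℕ) + 2) u) :
    u = 1 ∨ u = (i : ℕ) + r + 2 := by
  have hi := i.isLt
  obtain ⟨hne, hrel⟩ := adj_cases h
  rcases hrel with (h | ⟨h1, _⟩) | (h | ⟨h1, h2⟩)
  · rcases h with ⟨j, h1, h2⟩ | ⟨j, h1, h2⟩ | ⟨j, hj, h1, h2⟩ | ⟨j, hj, h1, h2⟩ <;>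
      have := j.isLt <;> omega
  · omega
  · rcases h with ⟨j, h1, h2⟩ | ⟨j, h1, h2⟩ | ⟨j, hj, h1, h2⟩ | ⟨j, hj, h1, h2⟩ <;>
      have := j.isLt <;> omega
  · omega

/-- Neighbours of a bottom-layer vertex `C_i = i + 2r + 2`. -/
lemma adj_C (hr : 1 ≤ r) {i : Fin r} {u : ℕ}
    (h : (disjCycleGraph r a b).Adj ((i : ℕ) + 2 * r + 2) u) :
    u = 3 * r + 2 ∨ u = (i : ℕ) + r + 2 := by
  have hi := i.isLt
  obtain ⟨hne, hrel⟩ := adj_cases h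
  rcases hrel with (h | ⟨h1, _⟩) | (h | ⟨h1, h2⟩)
  · rcases h with ⟨j, h1, h2⟩ | ⟨j, h1, h2⟩ | ⟨j, hj, h1, h2⟩ | ⟨j, hj, h1, h2⟩ <;>
      have := j.isLt <;> omega
  · omega
  · rcases h with ⟨j, h1, h2⟩ | ⟨j, h1, h2⟩ | ⟨j, hj, h1, h2⟩ | ⟨j, hj, h1, h2⟩ <;>
      have := j.isLt <;> omega
  · omega

/-- Any non-isolated vertex lies in one of the five layers. -/
lemma adj_classify {x y : ℕ} (h : (disjCycleGraph r a b).Adj x y) :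
    x = 1 ∨ x = 3 * r + 2 ∨ (∃ i : Fin r, x = (i : ℕ) + 2) ∨
      (∃ i : Fin r, x = (i : ℕ) + r + 2) ∨ (∃ i : Fin r, x = (i : ℕ) + 2 * r + 2) := by
  obtain ⟨hne, hrel⟩ := adj_cases h
  rcases hrel with (h | ⟨h1, _⟩) | (h | ⟨_, h1⟩)
  · rcases h with ⟨j, h1, h2⟩ | ⟨j, h1, h2⟩ | ⟨j, hj, h1, h2⟩ | ⟨j, hj, h1, h2⟩
    · exact Or.inl h1
    · exact Or.inr (Or.inl h1)
    · exact Or.inr (Or.inr (Or.inl ⟨j, h1⟩))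
    · exact Or.inr (Or.inr (Or.inr (Or.inl ⟨j, h1⟩)))
  · exact Or.inl h1
  · rcases h with ⟨j, h1, h2⟩ | ⟨j, h1, h2⟩ | ⟨j, hj, h1, h2⟩ | ⟨j, hj, h1, h2⟩
    · exact Or.inr (Or.inr (Or.inl ⟨j, h2⟩))
    · exact Or.inr (Or.inr (Or.inr (Or.inr ⟨j, h2⟩)))
    · exact Or.inr (Or.inr (Or.inr (Or.inl ⟨j, h2⟩)))
    · exact Or.inr (Or.inr (Or.inr (Or.inr ⟨j, h2⟩)))
  · exact Or.inr (Or.inl h1)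

end NeighborLemmas

/-- `G'` contains a cycle (necessarily of length `≥ 3`) if and only if
`DISJ(a,b) = 1`, i.e. there is some `i` with `a_i = b_i = 1`. -/
theorem disjCycleGraph_cycle_iff (r : ℕ) (hr : 1 ≤ r) (a b : Fin r → Bool) :
    (∃ (x : ℕ) (c : (disjCycleGraph r a b).Walk x x), c.IsCycle) ↔
      ∃ i, a i = true ∧ b i = true := by
  constructor
  · rintro ⟨x, c, hc⟩
    by_contra hD
    push_neg at hD
    -- Step 1: no B-vertex lies on the cycle.
    have hB : ∀ v ∈ c.support, ∀ i : Fin r, v ≠ (i : ℕ) + r + 2 := by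
      rintro v hv i rfl
      obtain ⟨u, w, huw, _, _, hu, hw⟩ := cycle_two_neighbors hc hv
      rcases adj_B hu with ⟨ha, rfl⟩ | ⟨hb, rfl⟩ <;>
        rcases adj_B hw with ⟨ha', h'⟩ | ⟨hb', h'⟩
      · exact huw h'.symm
      · exact hD i ha hb'
      · exact hD i ha' hb
      · exact huw h'.symm
    -- Step 2: no A-vertex lies on the cycle.
    have hA : ∀ v ∈ c.support, ∀ i : Fin r, v ≠ (i : ℕ) + 2 := by
      rintro v hv i rfl
      obtain ⟨u, w, huw, hus, hws, hu, hw⟩ := cycle_two_neighbors hc hv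
      rcases adj_A hr hu with rfl | rfl
      · rcases adj_A hr hw with rfl | rfl
        · exact huw rfl
        · exact hB _ hws i rfl
      · exact hB _ hus i rfl
    -- Step 3: no C-vertex lies on the cycle.
    have hC : ∀ v ∈ c.support, ∀ i : Fin r, v ≠ (i : ℕ) + 2 * r + 2 := by
      rintro v hv i rfl
      obtain ⟨u, w, huw, hus, hws, hu, hw⟩ := cycle_two_neighbors hc hv
      rcases adj_C hr hu with rfl | rfl
      · rcases adj_C hr hw with rfl | rfl
        · exact huw rfl
        · exact hB _ hws i rfl
      · exact hB _ hus i rfl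
    -- Step 4: every vertex on the cycle is `1` or `3r+2`.
    have hcls : ∀ v ∈ c.support, v = 1 ∨ v = 3 * r + 2 := by
      intro v hv
      obtain ⟨u, w, huw, _, _, hu, _⟩ := cycle_two_neighbors hc hv
      rcases adj_classify hu with h | h | ⟨i, rfl⟩ | ⟨i, rfl⟩ | ⟨i, rfl⟩
      · exact Or.inl h
      · exact Or.inr h
      · exact absurd rfl (hA _ hv i)
      · exact absurd rfl (hB _ hv i)
      · exact absurd rfl (hC _ hv i)
    -- Step 5: but the cycle has at least three distinct vertices.
    have hnd : c.support.tail.Nodup := hc.support_nodup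
    have hn3 : 3 ≤ c.length := hc.three_le_length
    have hlen : c.support.tail.length = c.length := by
      have h1 := Walk.length_support c
      rw [Walk.support_eq_cons c, List.length_cons] at h1
      omega
    have hsub : ∀ k (hk : k < c.support.tail.length),
        c.support.tail[k] = 1 ∨ c.support.tail[k] = 3 * r + 2 := by
      intro k hk
      exact hcls _ (List.mem_of_mem_tail (List.getElem_mem hk))
    have h01 : c.support.tail[0] ≠ c.support.tail[1] := by
      intro h
      exact absurd (hnd.getElem_inj_iff.mp h) (by omega)
    have h02 : c.support.tail[0] ≠ c.support.tail[2] := by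
      intro h
      exact absurd (hnd.getElem_inj_iff.mp h) (by omega)
    have h12 : c.support.tail[1] ≠ c.support.tail[2] := by
      intro h
      exact absurd (hnd.getElem_inj_iff.mp h) (by omega)
    have e0 := hsub 0 (by omega)
    have e1 := hsub 1 (by omega)
    have e2 := hsub 2 (by omega)
    omega
  · rintro ⟨i, hai, hbi⟩
    have hi := i.isLt
    -- the explicit 5-cycle 1, i+2, i+r+2, i+2r+2, 3r+2, 1
    have h1 : (disjCycleGraph r a b).Adj 1 ((i : ℕ) + 2) := by
      rw [disjCycleGraph, SimpleGraph.fromRel_adj]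
      exact ⟨by omega, Or.inl (Or.inl (Or.inl ⟨i, rfl, rfl⟩))⟩
    have h2 : (disjCycleGraph r a b).Adj ((i : ℕ) + 2) ((i : ℕ) + r + 2) := by
      rw [disjCycleGraph, SimpleGraph.fromRel_adj]
      exact ⟨by omega, Or.inl (Or.inl (Or.inr (Or.inr (Or.inl ⟨i, hai, rfl, rfl⟩))))⟩
    have h3 : (disjCycleGraph r a b).Adj ((i : ℕ) + r + 2) ((i : ℕ) + 2 * r + 2) := by
      rw [disjCycleGraph, SimpleGraph.fromRel_adj]
      exact ⟨by omega, Or.inl (Or.inl (Or.inr (Or.inr (Or.inr ⟨i, hbi, rfl, rfl⟩))))⟩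
    have h4 : (disjCycleGraph r a b).Adj ((i : ℕ) + 2 * r + 2) (3 * r + 2) := by
      rw [disjCycleGraph, SimpleGraph.fromRel_adj]
      exact ⟨by omega, Or.inr (Or.inl (Or.inr (Or.inl ⟨i, rfl, rfl⟩)))⟩
    have h5 : (disjCycleGraph r a b).Adj (3 * r + 2) 1 := by
      rw [disjCycleGraph, SimpleGraph.fromRel_adj]
      exact ⟨by omega, Or.inr (Or.inr ⟨rfl, rfl⟩)⟩
    refine ⟨1, Walk.cons h1 (Walk.cons h2 (Walk.cons h3 (Walk.cons h4
      (Walk.cons h5 Walk.nil)))), ?_⟩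
    rw [Walk.isCycle_def]
    refine ⟨?_, by simp, ?_⟩
    · rw [Walk.isTrail_def]
      simp only [Walk.edges_cons, Walk.edges_nil, List.nodup_cons, List.mem_cons,
        List.not_mem_nil, or_false, List.nodup_nil, and_true, Sym2.eq_iff]
      refine ⟨?_, ?_, ?_, ?_⟩ <;> push_neg <;>
        first
          | omega
          | (simp only [not_false_eq_true, and_true]; omega)
    · simp only [Walk.support_cons, Walk.support_nil, List.tail_cons, List.nodup_cons,
        List.mem_cons, List.not_mem_nil, or_false, List.nodup_nil, and_true]
      push_neg
      simp only [not_false_eq_true, and_true]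
      omega
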